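/- For every integer a ≥ 1, with n = 2^a and K = 2a, there exist n×n complex matrices (A_{iI}, A_{iQ})_{i=1}^{2a}, all unitary, with A_{1I} = I_n, satisfying the CUW conditions, and such that A_{1Q} is not a scalar multiple of I_n (hence no A_{iQ} is a real scalar multiple of A_{iI}). Consequently, for every a ≥ 1 there exists a 2^a × 2^a unitary-weight single-symbol-decodable code in 2a complex variables, i.e., of rate a/2^{a−1} complex symbols per channel use. -/

import Mathlib

open Matrix Kronecker

noncomputable section

private def px : Matrix (Fin 2) (Fin 2) ℂ := !![0,1;1,0]
private def py : Matrix (Fin 2) (Fin 2) ℂ := !![0,-Complex.I;Complex.I,0]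
private def pz : Matrix (Fin 2) (Fin 2) ℂ := !![1,0;0,-1]

private lemma px_herm : pxᴴ = px := by
  ext i j; fin_cases i <;> fin_cases j <;> simp [px]
private lemma py_herm : pyᴴ = py := by
  ext i j; fin_cases i <;> fin_cases j <;> simp [py]
private lemma pz_herm : pzᴴ = pz := by
  ext i j; fin_cases i <;> fin_cases j <;> simp [pz]
private lemma px_sq : px * px = 1 := by
  ext i j; fin_cases i <;> fin_cases j <;>
    simp [px, Matrix.mul_apply, Fin.sum_univ_two, Matrix.one_apply]
private lemma py_sq : py * py = 1 := by
  ext i j; fin_cases i <;> fin_cases j <;>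
    simp [py, Matrix.mul_apply, Fin.sum_univ_two, Matrix.one_apply]
private lemma pz_sq : pz * pz = 1 := by
  ext i j; fin_cases i <;> fin_cases j <;>
    simp [pz, Matrix.mul_apply, Fin.sum_univ_two, Matrix.one_apply]
private lemma pxy : px * py = -(py * px) := by
  ext i j; fin_cases i <;> fin_cases j <;>
    simp [px, py, Matrix.mul_apply, Fin.sum_univ_two]
private lemma pxz : px * pz = -(pz * px) := by
  ext i j; fin_cases i <;> fin_cases j <;>
    simp [px, pz, Matrix.mul_apply, Fin.sum_univ_two]
private lemma pyz : py * pz = -(pz * py) := by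
  ext i j; fin_cases i <;> fin_cases j <;>
    simp [py, pz, Matrix.mul_apply, Fin.sum_univ_two]

private lemma conjT_kron {m n : Type*} (A : Matrix m m ℂ) (B : Matrix n n ℂ) :
    (A ⊗ₖ B)ᴴ = Aᴴ ⊗ₖ Bᴴ := by
  ext i j
  simp [Matrix.conjTranspose_apply, Matrix.kroneckerMap_apply]

private lemma neg_kron {m n : Type*} (A : Matrix m m ℂ) (B : Matrix n n ℂ) :
    (-A) ⊗ₖ B = -(A ⊗ₖ B) := by
  ext i j
  simp [Matrix.kroneckerMap_apply]

private lemma kron_neg {m n : Type*} (A : Matrix m m ℂ) (B : Matrix n n ℂ) :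
    A ⊗ₖ (-B) = -(A ⊗ₖ B) := by
  ext i j
  simp [Matrix.kroneckerMap_apply]

/-- Existence of `2a+1` pairwise anticommuting hermitian involutive matrices. -/
private lemma exists_gamma (a : ℕ) :
    ∃ γ : Fin (2*a+1) → Matrix (Fin (2^a)) (Fin (2^a)) ℂ,
      (∀ k, (γ k)ᴴ = γ k) ∧ (∀ k, γ k * γ k = 1) ∧
      (∀ k l, k ≠ l → γ k * γ l = -(γ l * γ k)) := by
  induction a with
  | zero =>
    exact ⟨fun _ => 1, fun _ => by simp, fun _ => by simp,
      fun k l h => absurd (Fin.ext (by omega)) h⟩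
  | succ a ih =>
    obtain ⟨γ, hh, hs, hac⟩ := ih
    set δ : Fin (2*(a+1)+1) → Matrix (Fin (2^a) × Fin 2) (Fin (2^a) × Fin 2) ℂ :=
      fun k => if h : (k : ℕ) < 2*a+1 then γ ⟨k, h⟩ ⊗ₖ px
        else if (k : ℕ) = 2*a+1 then (1 : Matrix (Fin (2^a)) (Fin (2^a)) ℂ) ⊗ₖ py
        else (1 : Matrix (Fin (2^a)) (Fin (2^a)) ℂ) ⊗ₖ pz with hδ
    have e : Fin (2^a) × Fin 2 ≃ Fin (2^(a+1)) :=
      (finProdFinEquiv).trans (finCongr (by rw [pow_succ]))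
    have hδh : ∀ k, (δ k)ᴴ = δ k := by
      intro k
      by_cases h : (k:ℕ) < 2*a+1
      · simp [hδ, h, (by omega : (k:ℕ) ≤ 2*a), conjT_kron, hh, px_herm]
      · by_cases h2 : (k:ℕ) = 2*a+1 <;>
          simp [hδ, h, h2, dif_neg (show ¬ (k:ℕ) ≤ 2*a by omega), conjT_kron, py_herm, pz_herm]
    have hδs : ∀ k, δ k * δ k = 1 := by
      intro k
      by_cases h : (k:ℕ) < 2*a+1
      · simp [hδ, h, (by omega : (k:ℕ) ≤ 2*a), ← Matrix.mul_kronecker_mul, hs, px_sq, Matrix.one_kronecker_one]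
      · by_cases h2 : (k:ℕ) = 2*a+1 <;>
          simp [hδ, h, h2, dif_neg (show ¬ (k:ℕ) ≤ 2*a by omega), ← Matrix.mul_kronecker_mul, py_sq, pz_sq,
            Matrix.one_kronecker_one]
    have key : ∀ k l : Fin (2*(a+1)+1), (k:ℕ) < (l:ℕ) → δ k * δ l = -(δ l * δ k) := by
      intro k l hlt
      by_cases hl : (l:ℕ) < 2*a+1
      · have hk : (k:ℕ) < 2*a+1 := lt_trans hlt hl
        have hne : (⟨(k:ℕ), hk⟩ : Fin (2*a+1)) ≠ ⟨(l:ℕ), hl⟩ := by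
          simp only [ne_eq, Fin.mk.injEq]; omega
        simp only [hδ, dif_pos hk, dif_pos hl, ← Matrix.mul_kronecker_mul, hac _ _ hne,
          neg_kron]
      · by_cases hl2 : (l:ℕ) = 2*a+1
        · have hk : (k:ℕ) < 2*a+1 := by omega
          simp only [hδ, dif_pos hk, dif_neg hl, if_pos hl2, ← Matrix.mul_kronecker_mul,
            one_mul, mul_one, pxy, kron_neg]
        · by_cases hk : (k:ℕ) < 2*a+1
          · simp only [hδ, dif_pos hk, dif_neg hl, if_neg hl2, ← Matrix.mul_kronecker_mul,
              one_mul, mul_one, pxz, kron_neg]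
          · have hk2 : (k:ℕ) = 2*a+1 := by omega
            simp only [hδ, dif_neg hk, dif_neg hl, if_pos hk2, if_neg hl2,
              ← Matrix.mul_kronecker_mul, one_mul, pyz, kron_neg]
    refine ⟨fun k => Matrix.reindexAlgEquiv ℂ ℂ e (δ k), ?_, ?_, ?_⟩
    · intro k
      beta_reduce
      rw [Matrix.reindexAlgEquiv_apply, Matrix.conjTranspose_reindex, hδh]
    · intro k
      beta_reduce
      rw [← _root_.map_mul, hδs, _root_.map_one]
    · intro k l hkl
      beta_reduce
      rw [← _root_.map_mul, ← _root_.map_mul, ← map_neg]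
      congr 1
      rcases lt_or_gt_of_ne (fun h : (k:ℕ) = (l:ℕ) => hkl (Fin.ext h)) with h | h
      · exact key k l h
      · rw [key l k h, neg_neg]

open Matrix

/-- The SSD conditions on a family of weight-matrix pairs. -/
def SSDConds {n K : ℕ} (AI AQ : Fin K → Matrix (Fin n) (Fin n) ℂ) : Prop :=
  ∀ i j : Fin K, i ≠ j →
    (AI i)ᴴ * AQ j + (AQ j)ᴴ * AI i = 0 ∧
    (AI i)ᴴ * AI j + (AI j)ᴴ * AI i = 0 ∧
    (AQ i)ᴴ * AQ j + (AQ j)ᴴ * AQ i = 0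

/-- The CUW conditions on a family of weight-matrix pairs (index `⟨0,hK⟩`
plays the role of the index `1` of the paper). -/
def CUWConds {n K : ℕ} (hK : 0 < K) (AI AQ : Fin K → Matrix (Fin n) (Fin n) ℂ) : Prop :=
  AI ⟨0, hK⟩ = 1 ∧
  (∀ i : Fin K, i ≠ ⟨0, hK⟩ → (AI i)ᴴ = -(AI i)) ∧
  (∀ i j : Fin K, i ≠ ⟨0, hK⟩ → j ≠ ⟨0, hK⟩ → i ≠ j → AI i * AI j = -(AI j * AI i)) ∧
  (AQ ⟨0, hK⟩)ᴴ = AQ ⟨0, hK⟩ ∧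
  (∀ i : Fin K, i ≠ ⟨0, hK⟩ → AQ i = AQ ⟨0, hK⟩ * AI i) ∧
  (∀ j : Fin K, AQ ⟨0, hK⟩ * AI j = AI j * AQ ⟨0, hK⟩)

set_option maxHeartbeats 1000000 in
/-- For every `a ≥ 1` there exists a `2^a × 2^a` CUW-SSD code in `K = 2a`
complex variables (rate `a/2^(a-1)`): all weight matrices unitary, the CUW
conditions hold, the discriminant is non-scalar, no `A_{iQ}` is a real scalar
multiple of `A_{iI}`, and the family is single-symbol decodable. -/
theorem exists_cuw_ssd_code (a : ℕ) (ha : 1 ≤ a) (hK : 0 < 2 * a) :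
    ∃ AI AQ : Fin (2 * a) → Matrix (Fin (2 ^ a)) (Fin (2 ^ a)) ℂ,
      (∀ i, (AI i)ᴴ * AI i = 1) ∧
      (∀ i, (AQ i)ᴴ * AQ i = 1) ∧
      CUWConds hK AI AQ ∧
      (¬ ∃ c : ℂ, AQ ⟨0, hK⟩ = c • (1 : Matrix (Fin (2 ^ a)) (Fin (2 ^ a)) ℂ)) ∧
      (∀ i, ¬ ∃ c : ℝ, AQ i = (c : ℂ) • AI i) ∧
      SSDConds AI AQ := by
  obtain ⟨γ, hh, hs, hac⟩ := exists_gamma a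
  haveI : NeZero (2 ^ a) := ⟨by positivity⟩
  -- indices
  set i0 : Fin (2*a+1) := ⟨0, by omega⟩ with hi0
  set iL : Fin (2*a+1) := ⟨2*a, by omega⟩ with hiL
  set gi : Fin (2*a) → Fin (2*a+1) := fun i => ⟨(i:ℕ), by omega⟩ with hgi
  set B : Matrix (Fin (2^a)) (Fin (2^a)) ℂ := Complex.I • (γ i0 * γ iL) with hB
  set AI : Fin (2*a) → Matrix (Fin (2^a)) (Fin (2^a)) ℂ :=
    fun i => if (i:ℕ) = 0 then 1 else Complex.I • γ (gi i) with hAI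
  set AQ : Fin (2*a) → Matrix (Fin (2^a)) (Fin (2^a)) ℂ := fun i => B * AI i with hAQ
  have hne0L : i0 ≠ iL := by simp only [hi0, hiL, ne_eq, Fin.mk.injEq]; omega
  -- B is hermitian
  have hBH : Bᴴ = B := by
    rw [hB, Matrix.conjTranspose_smul, Matrix.conjTranspose_mul, hh, hh, hac _ _ hne0L.symm]
    simp [smul_neg]
  -- B squares to one
  have hBB : B * B = 1 := by
    have h1 : γ i0 * γ iL * (γ i0 * γ iL) = -1 := by
      calc γ i0 * γ iL * (γ i0 * γ iL) = γ i0 * (γ iL * γ i0) * γ iL := by noncomm_ring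
        _ = γ i0 * (-(γ i0 * γ iL)) * γ iL := by rw [hac _ _ hne0L.symm]
        _ = -((γ i0 * γ i0) * (γ iL * γ iL)) := by noncomm_ring
        _ = -1 := by rw [hs, hs, one_mul]
    rw [hB, smul_mul_assoc, mul_smul_comm, smul_smul, Complex.I_mul_I, h1]
    simp
  -- B commutes with every γ (gi i) for i ≠ 0
  have hBγ : ∀ i : Fin (2*a), (i:ℕ) ≠ 0 → B * γ (gi i) = γ (gi i) * B := by
    intro i hi
    have hneL : iL ≠ gi i := by
      simp only [hiL, hgi, ne_eq, Fin.mk.injEq]; omega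
    have hne0 : i0 ≠ gi i := by
      simp only [hi0, hgi, ne_eq, Fin.mk.injEq]; omega
    rw [hB, smul_mul_assoc, mul_smul_comm]
    congr 1
    calc γ i0 * γ iL * γ (gi i) = γ i0 * (γ iL * γ (gi i)) := by noncomm_ring
      _ = γ i0 * (-(γ (gi i) * γ iL)) := by rw [hac _ _ hneL]
      _ = -(γ i0 * γ (gi i)) * γ iL := by noncomm_ring
      _ = -(-(γ (gi i) * γ i0)) * γ iL := by rw [hac _ _ hne0]
      _ = γ (gi i) * (γ i0 * γ iL) := by noncomm_ring
  have hcomm : ∀ i, B * AI i = AI i * B := by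
    intro i
    by_cases hi : (i:ℕ) = 0
    · simp [hAI, hi]
    · simp only [hAI, if_neg hi, mul_smul_comm, smul_mul_assoc]
      rw [hBγ i hi]
  -- skewness of AI for i ≠ 0
  have hskew : ∀ i : Fin (2*a), (i:ℕ) ≠ 0 → (AI i)ᴴ = -(AI i) := by
    intro i hi
    simp only [hAI, if_neg hi, Matrix.conjTranspose_smul, hh]
    simp
  have hAI0 : AI ⟨0, hK⟩ = 1 := by simp [hAI]
  -- anticommutation of distinct nonzero AI's
  have hAIac : ∀ i j : Fin (2*a), (i:ℕ) ≠ 0 → (j:ℕ) ≠ 0 → i ≠ j →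
      AI i * AI j = -(AI j * AI i) := by
    intro i j hi hj hij
    have hne : gi i ≠ gi j := by
      simp only [hgi, ne_eq, Fin.mk.injEq]
      exact fun h => hij (Fin.ext h)
    simp only [hAI, if_neg hi, if_neg hj, smul_mul_assoc, mul_smul_comm, smul_smul,
      hac _ _ hne]
    simp
  -- unitarity of AI
  have hAIU : ∀ i, (AI i)ᴴ * AI i = 1 := by
    intro i
    by_cases hi : (i:ℕ) = 0
    · simp [hAI, hi]
    · simp only [hAI, if_neg hi, Matrix.conjTranspose_smul, hh, smul_mul_assoc,
        mul_smul_comm, smul_smul, hs]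
      simp [Complex.conj_I]
  have hAQU : ∀ i, (AQ i)ᴴ * AQ i = 1 := by
    intro i
    simp only [hAQ]
    rw [Matrix.conjTranspose_mul, hBH, mul_assoc, ← mul_assoc B, hBB, one_mul, hAIU]
  -- trace of B is zero
  have hBtr : Matrix.trace B = 0 := by
    have h1 : Matrix.trace (γ i0 * γ iL) = 0 := by
      have := Matrix.trace_mul_comm (γ i0) (γ iL)
      rw [hac _ _ hne0L.symm] at this
      simp only [Matrix.trace_neg] at this
      linear_combination this / 2
    rw [hB, Matrix.trace_smul, h1, smul_zero]
  -- B is not scalar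
  have hnsc : ¬ ∃ c : ℂ, B = c • (1 : Matrix (Fin (2 ^ a)) (Fin (2 ^ a)) ℂ) := by
    rintro ⟨c, hc⟩
    have h1 : Matrix.trace (c • (1 : Matrix (Fin (2 ^ a)) (Fin (2 ^ a)) ℂ)) = 0 := by
      rw [← hc, hBtr]
    rw [Matrix.trace_smul, Matrix.trace_one, smul_eq_mul] at h1
    have hcard : (Fintype.card (Fin (2^a)) : ℂ) ≠ 0 := by
      simp only [Fintype.card_fin]
      exact_mod_cast (by positivity : (2:ℕ)^a ≠ 0)
    have hc0 : c = 0 := by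
      rcases mul_eq_zero.mp h1 with h | h
      · exact h
      · exact absurd h hcard
    rw [hc0, zero_smul] at hc
    rw [hc, mul_zero] at hBB
    exact one_ne_zero hBB.symm
  have hAQ0 : AQ ⟨0, hK⟩ = B := by
    simp only [hAQ]
    rw [hAI0, mul_one]
  -- final assembly
  refine ⟨AI, AQ, hAIU, hAQU, ?_, ?_, ?_, ?_⟩
  · refine ⟨hAI0, ?_, ?_, ?_, ?_, ?_⟩
    · intro i hi
      exact hskew i (fun h => hi (Fin.ext h))
    · intro i j hi hj hij
      exact hAIac i j (fun h => hi (Fin.ext h)) (fun h => hj (Fin.ext h)) hij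
    · rw [hAQ0]; exact hBH
    · intro i _
      rw [hAQ0]
    · intro j
      rw [hAQ0]
      exact hcomm j
  · rw [hAQ0]; exact hnsc
  · intro i
    rintro ⟨c, hc⟩
    apply hnsc
    refine ⟨(c:ℂ), ?_⟩
    have hinv : AI i * (AI i)ᴴ = 1 := mul_eq_one_comm.mp (hAIU i)
    have : AQ i * (AI i)ᴴ = ((c:ℂ) • AI i) * (AI i)ᴴ := by rw [hc]
    rw [hAQ, mul_assoc, hinv, mul_one, smul_mul_assoc, hinv] at this
    exact this
  · -- SSD conditions
    have hAQH : ∀ j, (AQ j)ᴴ = (AI j)ᴴ * B := by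
      intro j
      simp only [hAQ]
      rw [Matrix.conjTranspose_mul, hBH]
    have hcommH : ∀ i, (AI i)ᴴ * B = B * (AI i)ᴴ := by
      intro i
      by_cases hi : (i:ℕ) = 0
      · have : AI i = 1 := by simp [hAI, hi]
        rw [this]; simp
      · rw [hskew i hi, neg_mul, mul_neg, hcomm]
    intro i j hij
    have G2 : (AI i)ᴴ * AI j + (AI j)ᴴ * AI i = 0 := by
      by_cases hi : (i:ℕ) = 0
      · have hiv : AI i = 1 := by simp [hAI, hi]
        have hj : (j:ℕ) ≠ 0 := fun h => hij (Fin.ext (hi.trans h.symm))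
        rw [hiv, hskew j hj]
        simp
      · by_cases hj : (j:ℕ) = 0
        · have hjv : AI j = 1 := by simp [hAI, hj]
          rw [hjv, hskew i hi]
          simp
        · rw [hskew i hi, hskew j hj, neg_mul, neg_mul, hAIac i j hi hj hij, neg_neg,
            add_neg_cancel]
    refine ⟨?_, G2, ?_⟩
    · -- (AI i)ᴴ * AQ j + (AQ j)ᴴ * AI i = 0
      rw [hAQH j]
      show (AI i)ᴴ * (B * AI j) + ((AI j)ᴴ * B) * AI i = 0
      rw [← mul_assoc, hcommH i, hcommH j, mul_assoc, mul_assoc, ← mul_add, G2, mul_zero]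
    · rw [hAQH i, hAQH j]
      show ((AI i)ᴴ * B) * (B * AI j) + ((AI j)ᴴ * B) * (B * AI i) = 0
      rw [mul_assoc, ← mul_assoc B B, hBB, one_mul, mul_assoc ((AI j)ᴴ), ← mul_assoc B B,
        hBB, one_mul, G2]
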